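/- For any i ≥ 2 and j ≥ 2, the Cartesian product P_i □ C_{2j} of a path on i vertices and an even cycle on 2j vertices is Hamilton laceable. -/

import Mathlib

open Matrix Finset

/-- A graph is Hamilton connected if any two distinct vertices are joined by a Hamilton path. -/
def HamConn {V : Type*} [DecidableEq V] (G : SimpleGraph V) : Prop :=
  ∀ x y : V, x ≠ y → ∃ p : G.Walk x y, p.IsHamiltonian

/-- A bipartite graph is Hamilton laceable: there is a proper 2-coloring such that any two
vertices of different colors are joined by a Hamilton path. -/
def HamLaceable {V : Type*} [DecidableEq V] (G : SimpleGraph V) : Prop :=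
  ∃ c : V → Bool, (∀ ⦃x y⦄, G.Adj x y → c x ≠ c y) ∧
    ∀ x y : V, c x ≠ c y → ∃ p : G.Walk x y, p.IsHamiltonian

/-- The undirected Cayley graph of a group with connection set `S` (acting on the left). -/
def cayley {G : Type*} [Group G] (S : Set G) : SimpleGraph G :=
  SimpleGraph.fromRel (fun x y => ∃ s ∈ S, y = s * x)

/-- The set of row operations specified by a transition graph `E` on `[n]` together with
row multiplications/divisions by `α`: elementary matrices `A_{ij}`, `A_{ij}⁻¹` for edges
`(i,j)` of `E`, and `M_i`, `M_i⁻¹` for all `i`. -/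
def ops (n : ℕ) (F : Type*) [Field F] (E : Fin n → Fin n → Prop) (α : F) :
    Set (Matrix.GeneralLinearGroup (Fin n) F) :=
  {A | (∃ i j, E i j ∧ ((A : Matrix (Fin n) (Fin n) F) = 1 + Matrix.single j i 1 ∨
        (A : Matrix (Fin n) (Fin n) F) = 1 + Matrix.single j i (-1))) ∨
      (∃ i, (A : Matrix (Fin n) (Fin n) F) = 1 + Matrix.single i i (α - 1) ∨
        (A : Matrix (Fin n) (Fin n) F) = 1 + Matrix.single i i (α⁻¹ - 1))}

/-- Bypass transition graphs: a single vertex, or obtained from a bypass transition graph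
on `[n-1]` by adding the vertex `n` with an in-edge from some `i ∈ [n-1]` and an out-edge
to some `j ∈ [n-1]`. -/
inductive IsBypass : (n : ℕ) → (Fin n → Fin n → Prop) → Prop
  | single (E : Fin 1 → Fin 1 → Prop) : IsBypass 1 E
  | step (n : ℕ) (E : Fin (n + 1) → Fin (n + 1) → Prop)
      (hin : ∃ i : Fin n, E i.castSucc (Fin.last n))
      (hout : ∃ j : Fin n, E (Fin.last n) j.castSucc)
      (hrec : IsBypass n (fun a b => E a.castSucc b.castSucc)) :
      IsBypass (n + 1) E

set_option maxHeartbeats 1000000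

namespace PCL
open SimpleGraph

/-! ## ℕ-level model of the cylinder `P_m □ C_n` -/

def cyc (n a b : ℕ) : Prop :=
  b = a + 1 ∨ a = b + 1 ∨ (a = 0 ∧ b = n - 1) ∨ (b = 0 ∧ a = n - 1)

def adjN (n : ℕ) (p q : ℕ × ℕ) : Prop :=
  (p.1 = q.1 ∧ cyc n p.2 q.2) ∨ (p.2 = q.2 ∧ (p.1 = q.1 + 1 ∨ q.1 = p.1 + 1))

lemma adjN_symm {n : ℕ} {p q : ℕ × ℕ} (h : adjN n p q) : adjN n q p := by
  unfold adjN cyc at *; omega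

structure HLN (m n : ℕ) (u v : ℕ × ℕ) (l : List (ℕ × ℕ)) : Prop where
  chain : l.IsChain (adjN n)
  nodup : l.Nodup
  len : l.length = m * n
  bnd : ∀ p ∈ l, p.1 < m ∧ p.2 < n
  hd : l.head? = some u
  lst : l.getLast? = some v

lemma HLN.cover {m n : ℕ} {u v : ℕ × ℕ} {l : List (ℕ × ℕ)} (h : HLN m n u v l)
    {p : ℕ × ℕ} (h1 : p.1 < m) (h2 : p.2 < n) : p ∈ l := by
  classical
  have hsub : l.toFinset ⊆ (Finset.range m) ×ˢ (Finset.range n) := by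
    intro x hx
    rw [List.mem_toFinset] at hx
    have := h.bnd x hx
    simp [Finset.mem_product, this.1, this.2]
  have hcard : ((Finset.range m) ×ˢ (Finset.range n)).card ≤ l.toFinset.card := by
    rw [Finset.card_product, Finset.card_range, Finset.card_range,
      List.toFinset_card_of_nodup h.nodup, h.len]
  have := Finset.eq_of_subset_of_card_le hsub hcard
  have hp : p ∈ (Finset.range m) ×ˢ (Finset.range n) := by
    simp [Finset.mem_product, h1, h2]
  rw [← this, List.mem_toFinset] at hp
  exact hp

lemma HLN.mem_u {m n : ℕ} {u v : ℕ × ℕ} {l : List (ℕ × ℕ)} (h : HLN m n u v l) : u ∈ l :=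
  List.mem_of_mem_head? (by rw [h.hd]; simp)

lemma HLN.ubnd {m n : ℕ} {u v : ℕ × ℕ} {l : List (ℕ × ℕ)} (h : HLN m n u v l) :
    u.1 < m ∧ u.2 < n := h.bnd u h.mem_u

lemma HLN.reverse {m n : ℕ} {u v : ℕ × ℕ} {l : List (ℕ × ℕ)} (h : HLN m n u v l) :
    HLN m n v u l.reverse where
  chain := List.isChain_reverse.mpr (h.chain.imp (fun _ _ hab => adjN_symm hab))
  nodup := List.nodup_reverse.mpr h.nodup
  len := by simp [h.len]
  bnd := fun p hp => h.bnd p (List.mem_reverse.mp hp)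
  hd := by simp [h.lst]
  lst := by simp [h.hd]

lemma HLN.build (m n N : ℕ) (f : ℕ → ℕ × ℕ) (u v : ℕ × ℕ)
    (hN : N = m * n) (hN0 : 0 < N)
    (hchain : ∀ t, t + 1 < N → adjN n (f t) (f (t + 1)))
    (hinj : ∀ s t, s < N → t < N → f s = f t → s = t)
    (hbnd : ∀ t < N, (f t).1 < m ∧ (f t).2 < n)
    (hu : f 0 = u) (hv : f (N - 1) = v) :
    HLN m n u v ((List.range N).map f) where
  chain := by
    rw [List.isChain_map]
    obtain ⟨N', rfl⟩ : ∃ N', N = N' + 1 := ⟨N - 1, by omega⟩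
    rw [List.isChain_range_succ]
    intro i hi
    exact hchain i (by omega)
  nodup := by
    refine List.Nodup.map_on ?_ (List.nodup_range)
    intro s hs t ht hst
    exact hinj s t (List.mem_range.mp hs) (List.mem_range.mp ht) hst
  len := by simp [hN]
  bnd := by
    intro p hp
    obtain ⟨t, ht, rfl⟩ := List.mem_map.mp hp
    exact hbnd t (List.mem_range.mp ht)
  hd := by
    rw [List.head?_eq_getElem?]
    simp [List.getElem?_map, List.getElem?_range hN0, hu]
  lst := by
    rw [List.getLast?_eq_getElem?]
    have hlen : ((List.range N).map f).length = N := by simp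
    rw [hlen]
    simp [List.getElem?_map, List.getElem?_range (show N - 1 < N by omega), hv]

/-! ## generic list lemmas -/

lemma chain'_map_mem {α β : Type*} {g : α → β} {R : α → α → Prop} {S : β → β → Prop}
    {B : α → Prop} (hg : ∀ p q, B p → B q → R p q → S (g p) (g q)) :
    ∀ {l : List α}, l.IsChain R → (∀ p ∈ l, B p) → (l.map g).IsChain S
  | [], _, _ => by simp
  | [a], _, _ => by simp
  | a :: b :: t, hc, hb => by
    rw [List.isChain_cons_cons] at hc
    have ih := chain'_map_mem hg hc.2 (fun p hp => hb p (List.mem_cons_of_mem a hp))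
    simp only [List.map_cons] at *
    rw [List.isChain_cons_cons]
    exact ⟨hg a b (hb a (by simp)) (hb b (by simp)) hc.1, ih⟩

lemma exists_triple {α : Type*} : ∀ {l : List α} {w : α}, w ∈ l → l.head? ≠ some w →
    l.getLast? ≠ some w → ∃ la x y lb, l = la ++ x :: w :: y :: lb
  | [], w, hmem, _, _ => by simp at hmem
  | a :: t, w, hmem, hh, hl => by
    have hwa : w ≠ a := by
      intro h; subst h; simp at hh
    have hwt : w ∈ t := by
      rcases List.mem_cons.mp hmem with h | h
      · exact absurd h hwa
      · exact h
    match t, hwt with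
    | b :: t', hwt =>
      by_cases hwb : w = b
      · subst hwb
        match t' with
        | [] => exact absurd (by simp) hl
        | y :: t'' => exact ⟨[], a, y, t'', by simp⟩
      · have hh' : (b :: t').head? ≠ some w := by
          simp only [List.head?_cons, Option.some.injEq, ne_eq]
          intro h
          exact hwb h.symm
        have hl' : (b :: t').getLast? ≠ some w := by
          rwa [List.getLast?_cons_cons] at hl
        obtain ⟨la, x, y, lb, heq⟩ := exists_triple hwt hh' hl'
        exact ⟨a :: la, x, y, lb, by simp [heq]⟩

lemma chain'_triple {α : Type*} {R : α → α → Prop} {la lb : List α} {x w y : α}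
    (h : List.IsChain R (la ++ x :: w :: y :: lb)) : R x w ∧ R w y := by
  rw [List.isChain_append] at h
  have := h.2.1
  rw [List.isChain_cons_cons, List.isChain_cons_cons] at this
  exact ⟨this.1, this.2.1⟩

lemma nodup_triple {α : Type*} {la lb : List α} {x w y : α}
    (h : (la ++ x :: w :: y :: lb).Nodup) : x ≠ w ∧ x ≠ y ∧ w ≠ y := by
  have := h.sublist (List.suffix_append la (x :: w :: y :: lb)).sublist
  simp only [List.nodup_cons, List.mem_cons] at this
  refine ⟨fun hx => this.1 (Or.inl hx), fun hx => this.1 (Or.inr (Or.inl hx)),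
    fun hx => this.2.1 (Or.inl hx)⟩

lemma head?_map_range {α : Type*} (g : ℕ → α) {n : ℕ} (hn : 0 < n) :
    ((List.range n).map g).head? = some (g 0) := by
  rw [List.head?_eq_getElem?]
  simp [List.getElem?_map, List.getElem?_range hn]

lemma getLast?_map_range {α : Type*} (g : ℕ → α) {n : ℕ} (hn : 0 < n) :
    ((List.range n).map g).getLast? = some (g (n - 1)) := by
  rw [List.getLast?_eq_getElem?]
  have hlen : ((List.range n).map g).length = n := by simp
  rw [hlen]
  simp [List.getElem?_map, List.getElem?_range (show n - 1 < n by omega)]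

end PCL
namespace PCL
open SimpleGraph

/-! ## from chain lists to walks -/

def ofChain {V : Type*} {G : SimpleGraph V} :
    (l : List V) → l.IsChain G.Adj → (u v : V) →
    l.head? = some u → l.getLast? = some v → G.Walk u v
  | [], _, _, _, hu, _ => absurd hu (by simp)
  | [a], _, u, v, hu, hv => by
    simp only [List.head?_cons, Option.some.injEq] at hu
    simp only [List.getLast?_singleton, Option.some.injEq] at hv
    subst hu; subst hv
    exact Walk.nil
  | a :: b :: t, hc, u, v, hu, hv => by
    simp only [List.head?_cons, Option.some.injEq] at hu
    subst hu
    rw [List.isChain_cons_cons] at hc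
    exact Walk.cons hc.1 (ofChain (b :: t) hc.2 b v rfl (by rw [← hv, List.getLast?_cons_cons]))

lemma support_ofChain {V : Type*} {G : SimpleGraph V} :
    ∀ (l : List V) (hc : l.IsChain G.Adj) (u v : V) (hu : l.head? = some u)
      (hv : l.getLast? = some v), (ofChain l hc u v hu hv).support = l
  | [], _, _, _, hu, _ => absurd hu (by simp)
  | [a], hc, u, v, hu, hv => by
    simp only [List.head?_cons, Option.some.injEq] at hu
    simp only [List.getLast?_singleton, Option.some.injEq] at hv
    subst hu; subst hv
    simp [ofChain]
  | a :: b :: t, hc, u, v, hu, hv => by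
    simp only [List.head?_cons, Option.some.injEq] at hu
    subst hu
    have := support_ofChain (b :: t) (List.isChain_cons_cons.mp hc).2 b v rfl
      (by rw [← hv, List.getLast?_cons_cons])
    simp [ofChain, Walk.support_cons, this]

/-! ## bridge between `adjN` and the box product graph -/

lemma submod (n a b : ℕ) (hn : 3 ≤ n) (ha : a < n) (hb : b < n) :
    ((n - b) + a) % n = 1 ↔ (a = b + 1 ∨ (b = n - 1 ∧ a = 0)) := by
  rcases Nat.lt_or_ge ((n - b) + a) n with h | h
  · rw [Nat.mod_eq_of_lt h]; omega
  · rw [Nat.mod_eq_sub_mod h, Nat.mod_eq_of_lt (by omega)]; omega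

lemma adj_bridge {m n : ℕ} (hn : 3 ≤ n) (p q : Fin m × Fin n) :
    ((pathGraph m).boxProd (cycleGraph n)).Adj p q ↔
      adjN n (p.1.val, p.2.val) (q.1.val, q.2.val) := by
  rw [boxProd_adj, pathGraph_adj, cycleGraph_adj']
  rw [Fin.sub_def, Fin.sub_def]
  simp only [Prod.ext_iff, Fin.ext_iff] at *
  rw [submod n _ _ hn p.2.isLt q.2.isLt, submod n _ _ hn q.2.isLt p.2.isLt]
  simp only [adjN, cyc]
  omega

lemma hln_exists_walk {m n : ℕ} (hm : 1 ≤ m) (hn : 3 ≤ n) (u v : Fin m × Fin n)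
    {l : List (ℕ × ℕ)} (h : HLN m n (u.1.val, u.2.val) (v.1.val, v.2.val) l) :
    ∃ p : ((pathGraph m).boxProd (cycleGraph n)).Walk u v, p.IsHamiltonian := by
  classical
  have hm0 : 0 < m := hm
  have hn0 : 0 < n := by omega
  set G := (pathGraph m).boxProd (cycleGraph n) with hG
  let tV : ℕ × ℕ → Fin m × Fin n := fun p => (⟨p.1 % m, Nat.mod_lt _ hm0⟩, ⟨p.2 % n, Nat.mod_lt _ hn0⟩)
  have htv : ∀ p : ℕ × ℕ, p.1 < m → p.2 < n → ((tV p).1.val = p.1 ∧ (tV p).2.val = p.2) := by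
    intro p h1 h2
    constructor
    · exact Nat.mod_eq_of_lt h1
    · exact Nat.mod_eq_of_lt h2
  have hchain : (l.map tV).IsChain G.Adj := by
    refine chain'_map_mem (B := fun p => p.1 < m ∧ p.2 < n) ?_ h.chain h.bnd
    intro p q hp hq hpq
    rw [hG, adj_bridge hn]
    have h1 := htv p hp.1 hp.2
    have h2 := htv q hq.1 hq.2
    rw [h1.1, h1.2, h2.1, h2.2]
    simpa using hpq
  have hdu : (l.map tV).head? = some u := by
    rw [List.head?_map, h.hd]
    have := htv (u.1.val, u.2.val) u.1.isLt u.2.isLt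
    simp only [Option.map_some]
    congr 1
    exact Prod.ext (Fin.ext this.1) (Fin.ext this.2)
  have hdv : (l.map tV).getLast? = some v := by
    rw [List.getLast?_map, h.lst]
    have := htv (v.1.val, v.2.val) v.1.isLt v.2.isLt
    simp only [Option.map_some]
    congr 1
    exact Prod.ext (Fin.ext this.1) (Fin.ext this.2)
  refine ⟨ofChain (l.map tV) hchain u v hdu hdv, ?_⟩
  intro x
  rw [support_ofChain]
  have hnodup : (l.map tV).Nodup := by
    refine List.Nodup.map_on ?_ h.nodup
    intro p hp q hq hpq
    have h1 := htv p (h.bnd p hp).1 (h.bnd p hp).2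
    have h2 := htv q (h.bnd q hq).1 (h.bnd q hq).2
    have e1 : p.1 = q.1 := by rw [← h1.1, ← h2.1, hpq]
    have e2 : p.2 = q.2 := by rw [← h1.2, ← h2.2, hpq]
    exact Prod.ext e1 e2
  have hmem : x ∈ l.map tV := by
    have hx : ((x.1.val : ℕ), (x.2.val : ℕ)) ∈ l := h.cover x.1.isLt x.2.isLt
    refine List.mem_map.mpr ⟨((x.1.val : ℕ), (x.2.val : ℕ)), hx, ?_⟩
    have := htv ((x.1.val : ℕ), (x.2.val : ℕ)) x.1.isLt x.2.isLt
    exact Prod.ext (Fin.ext this.1) (Fin.ext this.2)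
  exact @List.count_eq_one_of_mem _ instBEqOfDecidableEq _ _ _ hnodup hmem

end PCL
namespace PCL

/-! ## transformations -/

lemma HLN.trans {m n : ℕ} {u v : ℕ × ℕ} {l : List (ℕ × ℕ)} (g : ℕ × ℕ → ℕ × ℕ)
    (h : HLN m n u v l)
    (hadj : ∀ p q, (p.1 < m ∧ p.2 < n) → (q.1 < m ∧ q.2 < n) → adjN n p q → adjN n (g p) (g q))
    (hinj : ∀ p q, (p.1 < m ∧ p.2 < n) → (q.1 < m ∧ q.2 < n) → g p = g q → p = q)
    (hbnd : ∀ p, (p.1 < m ∧ p.2 < n) → ((g p).1 < m ∧ (g p).2 < n)) :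
    HLN m n (g u) (g v) (l.map g) where
  chain := chain'_map_mem (B := fun p => p.1 < m ∧ p.2 < n) hadj h.chain h.bnd
  nodup := List.Nodup.map_on (fun p hp q hq => hinj p q (h.bnd p hp) (h.bnd q hq)) h.nodup
  len := by simp [h.len]
  bnd := by
    intro p hp
    obtain ⟨x, hx, rfl⟩ := List.mem_map.mp hp
    exact hbnd x (h.bnd x hx)
  hd := by rw [List.head?_map, h.hd, Option.map_some]
  lst := by rw [List.getLast?_map, h.lst, Option.map_some]

def rotF (n k : ℕ) (p : ℕ × ℕ) : ℕ × ℕ :=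
  (p.1, if p.2 + k < n then p.2 + k else p.2 + k - n)

lemma HLN.rot {m n : ℕ} {u v : ℕ × ℕ} {l : List (ℕ × ℕ)} (h : HLN m n u v l)
    {k : ℕ} (hk : k < n) :
    HLN m n (rotF n k u) (rotF n k v) (l.map (rotF n k)) := by
  refine h.trans (rotF n k) ?_ ?_ ?_
  · intro p q hp hq hpq
    unfold rotF adjN cyc at *
    dsimp only at *
    split_ifs <;> omega
  · intro p q hp hq hpq
    unfold rotF at hpq
    rw [Prod.ext_iff] at hpq
    dsimp only at hpq
    refine Prod.ext hpq.1 ?_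
    rcases hpq with ⟨-, h2⟩
    split_ifs at h2 <;> omega
  · intro p hp
    unfold rotF
    dsimp only
    split_ifs <;> omega

def flipF (m : ℕ) (p : ℕ × ℕ) : ℕ × ℕ := (m - 1 - p.1, p.2)

lemma HLN.flip {m n : ℕ} {u v : ℕ × ℕ} {l : List (ℕ × ℕ)} (h : HLN m n u v l) :
    HLN m n (flipF m u) (flipF m v) (l.map (flipF m)) := by
  refine h.trans (flipF m) ?_ ?_ ?_
  · intro p q hp hq hpq
    unfold flipF adjN cyc at *
    dsimp only at *
    omega
  · intro p q hp hq hpq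
    unfold flipF at hpq
    rw [Prod.ext_iff] at hpq
    dsimp only at hpq
    exact Prod.ext (by omega) hpq.2
  · intro p hp
    unfold flipF
    dsimp only
    omega

/-! ## the three base constructions on two rows -/

def fC1 (n q : ℕ) (t : ℕ) : ℕ × ℕ :=
  if t < 2 * q then (if t % 4 = 1 ∨ t % 4 = 2 then 1 else 0, t / 2)
  else if t < q + n then (0, t - q)
  else (1, 2 * n + q - 1 - t)

lemma hlnC1 {n q : ℕ} (hn : 4 ≤ n) (he : n % 2 = 0) (hq : q % 2 = 0) (hqn : q < n) :
    HLN 2 n (0, 0) (1, q) ((List.range (2 * n)).map (fC1 n q)) := by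
  refine HLN.build 2 n (2 * n) (fC1 n q) (0, 0) (1, q) (by ring) (by omega) ?_ ?_ ?_ ?_ ?_
  · intro t ht
    unfold fC1 adjN cyc
    split_ifs <;> first | contradiction | (dsimp only; omega)
  · intro s t hs ht heq
    unfold fC1 at heq
    split_ifs at heq <;>
      first | contradiction |
        (simp only [Prod.mk.injEq, true_and, and_true, false_and, and_false] at heq; omega)
  · intro t ht
    unfold fC1
    split_ifs <;> first | contradiction | (dsimp only; omega)
  · unfold fC1
    split_ifs <;>
      first | contradiction |
        ((try simp only [Prod.mk.injEq, true_and, and_true, false_and, and_false]); (try omega))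
  · unfold fC1
    split_ifs <;>
      first | contradiction |
        ((try simp only [Prod.mk.injEq, true_and, and_true, false_and, and_false]); (try omega))

def fC2 (n q : ℕ) (t : ℕ) : ℕ × ℕ :=
  if t = 0 then (0, 0)
  else if t = 1 then (1, 0)
  else if t < 2 + 2 * (n - 1 - q) then
    (if (t - 2) % 4 = 0 ∨ (t - 2) % 4 = 3 then 1 else 0, n - 1 - (t - 2) / 2)
  else if t < 2 + 2 * (n - 1 - q) + q then (1, q - (t - (2 + 2 * (n - 1 - q))))
  else (0, t - (2 + 2 * (n - 1 - q) + q) + 1)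

lemma hlnC2 {n q : ℕ} (hn : 4 ≤ n) (he : n % 2 = 0) (hq : q % 2 = 1) (hqn : q + 3 ≤ n) :
    HLN 2 n (0, 0) (0, q) ((List.range (2 * n)).map (fC2 n q)) := by
  refine HLN.build 2 n (2 * n) (fC2 n q) (0, 0) (0, q) (by ring) (by omega) ?_ ?_ ?_ ?_ ?_
  · intro t ht
    unfold fC2 adjN cyc
    split_ifs <;> first | contradiction | (dsimp only; omega)
  · intro s t hs ht heq
    unfold fC2 at heq
    split_ifs at heq <;>
      first | contradiction |
        (simp only [Prod.mk.injEq, true_and, and_true, false_and, and_false] at heq; omega)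
  · intro t ht
    unfold fC2
    split_ifs <;> first | contradiction | (dsimp only; omega)
  · unfold fC2
    split_ifs <;>
      first | contradiction |
        ((try simp only [Prod.mk.injEq, true_and, and_true, false_and, and_false]); (try omega))
  · unfold fC2
    split_ifs <;>
      first | contradiction |
        ((try simp only [Prod.mk.injEq, true_and, and_true, false_and, and_false]); (try omega))

def fC3 (n : ℕ) (t : ℕ) : ℕ × ℕ :=
  if t < 2 * (n - 1) then (if t % 4 = 1 ∨ t % 4 = 2 then 1 else 0, t / 2)
  else if t = 2 * n - 2 then (1, n - 1)
  else (0, n - 1)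

lemma hlnC3 {n : ℕ} (hn : 4 ≤ n) (he : n % 2 = 0) :
    HLN 2 n (0, 0) (0, n - 1) ((List.range (2 * n)).map (fC3 n)) := by
  refine HLN.build 2 n (2 * n) (fC3 n) (0, 0) (0, n - 1) (by ring) (by omega) ?_ ?_ ?_ ?_ ?_
  · intro t ht
    unfold fC3 adjN cyc
    split_ifs <;> first | contradiction | (dsimp only; omega)
  · intro s t hs ht heq
    unfold fC3 at heq
    split_ifs at heq <;>
      first | contradiction |
        (simp only [Prod.mk.injEq, true_and, and_true, false_and, and_false] at heq; omega)
  · intro t ht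
    unfold fC3
    split_ifs <;> first | contradiction | (dsimp only; omega)
  · unfold fC3
    split_ifs <;>
      first | contradiction |
        ((try simp only [Prod.mk.injEq, true_and, and_true, false_and, and_false]); (try omega))
  · unfold fC3
    split_ifs <;>
      first | contradiction |
        ((try simp only [Prod.mk.injEq, true_and, and_true, false_and, and_false]); (try omega))

/-- base case: the `2 × n` cylinder -/
lemma base2 {n : ℕ} (hn : 4 ≤ n) (he : n % 2 = 0) :
    ∀ u v : ℕ × ℕ, u.1 < 2 → u.2 < n → v.1 < 2 → v.2 < n →
      (u.1 + u.2) % 2 ≠ (v.1 + v.2) % 2 → ∃ l, HLN 2 n u v l := by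
  -- first: u = (0,0)
  have key : ∀ b q : ℕ, b < 2 → q < n → (b + q) % 2 = 1 → ∃ l, HLN 2 n (0, 0) (b, q) l := by
    intro b q hb hq hpar
    rcases Nat.lt_or_ge b 1 with hb0 | hb1
    · -- b = 0, q odd
      obtain rfl : b = 0 := by omega
      rcases Nat.lt_or_ge q (n - 1) with hq1 | hq2
      · exact ⟨_, hlnC2 hn he (by omega) (by omega)⟩
      · obtain rfl : q = n - 1 := by omega
        exact ⟨_, hlnC3 hn he⟩
    · obtain rfl : b = 1 := by omega
      exact ⟨_, hlnC1 hn he (by omega) hq⟩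
  intro u v hu1 hu2 hv1 hv2 hcol
  -- the column shift carrying 0 to u.2, and its effect on v
  set q : ℕ := if u.2 ≤ v.2 then v.2 - u.2 else v.2 + n - u.2 with hqdef
  have hqn : q < n := by rw [hqdef]; split_ifs <;> omega
  have hrotu : rotF n u.2 ((u.1 : ℕ), (0 : ℕ)) = u := by
    unfold rotF
    dsimp only
    rw [Prod.ext_iff]
    constructor
    · rfl
    · dsimp only; split_ifs <;> omega
  have hrotv : ∀ b : ℕ, rotF n u.2 (b, q) = (b, v.2) := by
    intro b
    unfold rotF
    dsimp only
    rw [Prod.ext_iff]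
    constructor
    · rfl
    · dsimp only; rw [hqdef]; split_ifs <;> omega
  rcases Nat.lt_or_ge u.1 1 with ha0 | ha1
  · -- u.1 = 0
    have hu10 : u.1 = 0 := by omega
    obtain ⟨l, hl⟩ := key v.1 q hv1 hqn (by rw [hqdef]; split_ifs <;> omega)
    have h3 := hl.rot (k := u.2) hu2
    rw [hrotv v.1] at h3
    have hrotu' : rotF n u.2 ((0 : ℕ), (0 : ℕ)) = u := by rw [hu10] at hrotu; exact hrotu
    rw [hrotu'] at h3
    exact ⟨_, h3⟩
  · -- u.1 = 1 : flip rows first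
    have hu11 : u.1 = 1 := by omega
    obtain ⟨l, hl⟩ := key (1 - v.1) q (by omega) hqn (by rw [hqdef]; split_ifs <;> omega)
    have h2 := hl.flip (m := 2)
    have e1 : flipF 2 ((0 : ℕ), (0 : ℕ)) = ((1 : ℕ), (0 : ℕ)) := rfl
    have e2 : flipF 2 ((1 - v.1 : ℕ), q) = (v.1, q) := by
      unfold flipF
      exact Prod.ext (by dsimp only; omega) rfl
    rw [e1, e2] at h2
    have h3 := h2.rot (k := u.2) hu2
    rw [hrotv v.1] at h3
    have hrotu' : rotF n u.2 ((1 : ℕ), (0 : ℕ)) = u := by rw [hu11] at hrotu; exact hrotu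
    rw [hrotu'] at h3
    exact ⟨_, h3⟩

end PCL
namespace PCL

lemma getLast?_append_cons {α : Type*} (la : List α) (x : α) (lb : List α) :
    (la ++ x :: lb).getLast? = (x :: lb).getLast? := by
  obtain ⟨z, hz⟩ := Option.isSome_iff_exists.mp
    (List.getLast?_isSome.mpr (List.cons_ne_nil x lb))
  rw [List.getLast?_append, hz, Option.some_or]

lemma arc_chain' {n : ℕ} (m : ℕ) (g : ℕ → ℕ × ℕ) (hm0 : 0 < m)
    (hgchain : ∀ t, t + 1 < m → adjN n (g t) (g (t + 1))) :
    ((List.range m).map g).IsChain (adjN n) := by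
  rw [List.isChain_map]
  obtain ⟨N', rfl⟩ : ∃ N', m = N' + 1 := ⟨m - 1, by omega⟩
  rw [List.isChain_range_succ]
  intro t ht
  exact hgchain t (by omega)

lemma arc_nodup {m : ℕ} (g : ℕ → ℕ × ℕ)
    (hginj : ∀ s t, s < m → t < m → g s = g t → s = t) :
    ((List.range m).map g).Nodup := by
  refine List.Nodup.map_on ?_ (List.nodup_range)
  intro s hs t ht hst
  exact hginj s t (List.mem_range.mp hs) (List.mem_range.mp ht) hst

lemma arc_mem {m : ℕ} {g : ℕ → ℕ × ℕ} {x : ℕ × ℕ} (hx : x ∈ (List.range m).map g) :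
    ∃ t, t < m ∧ x = g t := by
  obtain ⟨t, ht, rfl⟩ := List.mem_map.mp hx
  exact ⟨t, List.mem_range.mp ht, rfl⟩

/-- splice an arc through the new top row between two horizontally adjacent
vertices of the old top row -/
lemma splice_core {i n : ℕ} (hn : 4 ≤ n) (hi : 2 ≤ i) {u v p1 p2 : ℕ × ℕ}
    {la lb : List (ℕ × ℕ)}
    (h : HLN i n u v (la ++ p1 :: p2 :: lb))
    (g : ℕ → ℕ × ℕ)
    (hg0 : g 0 = (i, p1.2)) (hgl : g (n - 1) = (i, p2.2))
    (hgrow : ∀ t < n, (g t).1 = i ∧ (g t).2 < n)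
    (hgchain : ∀ t, t + 1 < n → adjN n (g t) (g (t + 1)))
    (hginj : ∀ s t, s < n → t < n → g s = g t → s = t)
    (hp1 : p1.1 = i - 1) (hp2 : p2.1 = i - 1) :
    HLN (i + 1) n u v (la ++ p1 :: ((List.range n).map g ++ p2 :: lb)) := by
  have hn0 : 0 < n := by omega
  set arc := (List.range n).map g with harc
  have harc_hd : arc.head? = some (g 0) := head?_map_range g hn0
  have harc_lst : arc.getLast? = some (g (n - 1)) := getLast?_map_range g hn0
  have hchain0 := h.chain
  rw [List.isChain_append] at hchain0
  obtain ⟨hcla, hcrest, hclink⟩ := hchain0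
  rw [List.isChain_cons_cons] at hcrest
  obtain ⟨hadj12, hcrest2⟩ := hcrest
  have hperm : List.Perm (la ++ p1 :: (arc ++ p2 :: lb)) ((la ++ p1 :: p2 :: lb) ++ arc) := by
    have h1 : List.Perm (arc ++ p2 :: lb) ((p2 :: lb) ++ arc) := List.perm_append_comm
    have h2 : List.Perm (p1 :: (arc ++ p2 :: lb)) (p1 :: ((p2 :: lb) ++ arc)) := h1.cons p1
    have h3 := h2.append_left la
    refine h3.trans ?_
    have he : la ++ p1 :: ((p2 :: lb) ++ arc) = (la ++ p1 :: p2 :: lb) ++ arc := by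
      simp [List.append_assoc]
    rw [he]
  refine ⟨?_, ?_, ?_, ?_, ?_, ?_⟩
  · -- chain
    rw [List.isChain_append]
    refine ⟨hcla, ?_, ?_⟩
    · rw [List.isChain_cons]
      constructor
      · intro y hy
        rw [List.head?_append, harc_hd, Option.some_or, Option.mem_def,
          Option.some.injEq] at hy
        subst hy
        rw [hg0]
        right
        exact ⟨rfl, by dsimp only; omega⟩
      · rw [List.isChain_append]
        refine ⟨arc_chain' n g hn0 hgchain, hcrest2, ?_⟩
        intro x hx y hy
        rw [harc_lst, Option.mem_def, Option.some.injEq] at hx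
        subst hx
        simp only [List.head?_cons, Option.mem_def, Option.some.injEq] at hy
        subst hy
        rw [hgl]
        right
        exact ⟨rfl, by dsimp only; omega⟩
    · intro x hx y hy
      simp only [List.head?_cons, Option.mem_def, Option.some.injEq] at hy
      subst hy
      exact hclink x hx p1 (by simp)
  · -- nodup
    rw [hperm.nodup_iff, List.nodup_append']
    refine ⟨h.nodup, arc_nodup g hginj, ?_⟩
    intro x hxl hxa
    have h1 := (h.bnd x hxl).1
    obtain ⟨t, ht, rfl⟩ := arc_mem hxa
    have h2 := (hgrow t ht).1
    omega
  · -- length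
    have hmul : (i + 1) * n = i * n + n := by ring
    rw [hperm.length_eq, List.length_append, h.len, harc, List.length_map,
      List.length_range, hmul]
  · -- bounds
    intro p hp
    rw [hperm.mem_iff, List.mem_append] at hp
    rcases hp with hp | hp
    · have := h.bnd p hp
      omega
    · obtain ⟨t, ht, rfl⟩ := arc_mem hp
      have := hgrow t ht
      omega
  · -- head?
    have hh := h.hd
    rw [List.head?_append] at hh ⊢
    simpa using hh
  · -- getLast?
    have hl0 := h.lst
    have e1 : la ++ p1 :: p2 :: lb = (la ++ [p1]) ++ p2 :: lb := by simp
    rw [e1, getLast?_append_cons] at hl0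
    have e2 : la ++ p1 :: (arc ++ p2 :: lb) = (la ++ p1 :: arc) ++ p2 :: lb := by simp
    rw [e2, getLast?_append_cons]
    exact hl0

/-- append an arc through the new top row at the end of a path -/
lemma extend_core {i n : ℕ} (hn : 4 ≤ n) (hi : 1 ≤ i) {u w : ℕ × ℕ} {l : List (ℕ × ℕ)}
    (h : HLN i n u w l)
    (g : ℕ → ℕ × ℕ)
    (hg0 : g 0 = (i, w.2))
    (hgrow : ∀ t < n, (g t).1 = i ∧ (g t).2 < n)
    (hgchain : ∀ t, t + 1 < n → adjN n (g t) (g (t + 1)))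
    (hginj : ∀ s t, s < n → t < n → g s = g t → s = t)
    (hw : w.1 = i - 1) :
    HLN (i + 1) n u (g (n - 1)) (l ++ (List.range n).map g) := by
  have hn0 : 0 < n := by omega
  set arc := (List.range n).map g with harc
  have harc_hd : arc.head? = some (g 0) := head?_map_range g hn0
  have harc_lst : arc.getLast? = some (g (n - 1)) := getLast?_map_range g hn0
  refine ⟨?_, ?_, ?_, ?_, ?_, ?_⟩
  · rw [List.isChain_append]
    refine ⟨h.chain, arc_chain' n g hn0 hgchain, ?_⟩
    intro x hx y hy
    rw [h.lst, Option.mem_def, Option.some.injEq] at hx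
    subst hx
    rw [harc_hd, Option.mem_def, Option.some.injEq] at hy
    subst hy
    rw [hg0]
    right
    exact ⟨rfl, by dsimp only; omega⟩
  · rw [List.nodup_append']
    refine ⟨h.nodup, arc_nodup g hginj, ?_⟩
    intro x hxl hxa
    have h1 := (h.bnd x hxl).1
    obtain ⟨t, ht, rfl⟩ := arc_mem hxa
    have h2 := (hgrow t ht).1
    omega
  · have hmul : (i + 1) * n = i * n + n := by ring
    rw [List.length_append, h.len, harc, List.length_map, List.length_range, hmul]
  · intro p hp
    rw [List.mem_append] at hp
    rcases hp with hp | hp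
    · have := h.bnd p hp
      omega
    · obtain ⟨t, ht, rfl⟩ := arc_mem hp
      have := hgrow t ht
      omega
  · rw [List.head?_append, h.hd, Option.some_or]
  · rw [List.getLast?_append, harc_lst, Option.some_or]

/-- prepend and append arcs through the new top row -/
lemma doubleext_core {i n : ℕ} (hn : 4 ≤ n) (hi : 1 ≤ i) {sL sR : ℕ × ℕ}
    {l : List (ℕ × ℕ)} (h : HLN i n sL sR l)
    (gP gB : ℕ → ℕ × ℕ) (dP dB : ℕ) (hdP : 0 < dP) (hdB : 0 < dB) (hsum : dP + dB = n)
    (hProw : ∀ t < dP, (gP t).1 = i ∧ (gP t).2 < n)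
    (hBrow : ∀ t < dB, (gB t).1 = i ∧ (gB t).2 < n)
    (hPchain : ∀ t, t + 1 < dP → adjN n (gP t) (gP (t + 1)))
    (hBchain : ∀ t, t + 1 < dB → adjN n (gB t) (gB (t + 1)))
    (hPinj : ∀ s t, s < dP → t < dP → gP s = gP t → s = t)
    (hBinj : ∀ s t, s < dB → t < dB → gB s = gB t → s = t)
    (hPlast : gP (dP - 1) = (i, sL.2)) (hsL : sL.1 = i - 1)
    (hBhead : gB 0 = (i, sR.2)) (hsR : sR.1 = i - 1)
    (hdisj : ∀ s t, s < dP → t < dB → gP s ≠ gB t) :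
    HLN (i + 1) n (gP 0) (gB (dB - 1))
      ((List.range dP).map gP ++ (l ++ (List.range dB).map gB)) := by
  set arcP := (List.range dP).map gP with harcP
  set arcB := (List.range dB).map gB with harcB
  have hP_hd : arcP.head? = some (gP 0) := head?_map_range gP hdP
  have hP_lst : arcP.getLast? = some (gP (dP - 1)) := getLast?_map_range gP hdP
  have hB_hd : arcB.head? = some (gB 0) := head?_map_range gB hdB
  have hB_lst : arcB.getLast? = some (gB (dB - 1)) := getLast?_map_range gB hdB
  refine ⟨?_, ?_, ?_, ?_, ?_, ?_⟩
  · rw [List.isChain_append]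
    refine ⟨arc_chain' dP gP hdP hPchain, ?_, ?_⟩
    · rw [List.isChain_append]
      refine ⟨h.chain, arc_chain' dB gB hdB hBchain, ?_⟩
      intro x hx y hy
      rw [h.lst, Option.mem_def, Option.some.injEq] at hx
      subst hx
      rw [hB_hd, Option.mem_def, Option.some.injEq] at hy
      subst hy
      rw [hBhead]
      right
      exact ⟨rfl, by dsimp only; omega⟩
    · intro x hx y hy
      rw [hP_lst, Option.mem_def, Option.some.injEq] at hx
      subst hx
      rw [List.head?_append, h.hd, Option.some_or, Option.mem_def, Option.some.injEq] at hy
      subst hy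
      rw [hPlast]
      right
      exact ⟨rfl, by dsimp only; omega⟩
  · rw [List.nodup_append']
    refine ⟨arc_nodup gP hPinj, ?_, ?_⟩
    · rw [List.nodup_append']
      refine ⟨h.nodup, arc_nodup gB hBinj, ?_⟩
      intro x hxl hxa
      have h1 := (h.bnd x hxl).1
      obtain ⟨t, ht, rfl⟩ := arc_mem hxa
      have h2 := (hBrow t ht).1
      omega
    · intro x hxP hx
      obtain ⟨s, hs, rfl⟩ := arc_mem hxP
      rw [List.mem_append] at hx
      rcases hx with hx | hx
      · have h1 := (h.bnd _ hx).1
        have h2 := (hProw s hs).1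
        omega
      · obtain ⟨t, ht, heq⟩ := arc_mem hx
        exact hdisj s t hs ht heq
  · have hmul : (i + 1) * n = i * n + n := by ring
    rw [List.length_append, List.length_append, h.len, harcP, harcB, List.length_map,
      List.length_map, List.length_range, List.length_range, hmul]
    omega
  · intro p hp
    rw [List.mem_append] at hp
    rcases hp with hp | hp
    · obtain ⟨t, ht, rfl⟩ := arc_mem hp
      have := hProw t ht
      omega
    · rw [List.mem_append] at hp
      rcases hp with hp | hp
      · have := h.bnd p hp
        omega
      · obtain ⟨t, ht, rfl⟩ := arc_mem hp
        have := hBrow t ht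
        omega
  · rw [List.head?_append, hP_hd, Option.some_or]
  · rw [List.getLast?_append, List.getLast?_append, hB_lst, Option.some_or, Option.some_or]

end PCL
namespace PCL

/-- choose a splice direction and do the splice -/
lemma splice_dir {i n : ℕ} (hn : 4 ≤ n) (hi : 2 ≤ i) {u v p1 p2 : ℕ × ℕ}
    {la lb : List (ℕ × ℕ)}
    (h : HLN i n u v (la ++ p1 :: p2 :: lb))
    (hp1 : p1.1 = i - 1) (hp2 : p2.1 = i - 1)
    (hc1 : p1.2 < n) (hc2 : p2.2 < n)
    (hcyc : cyc n p1.2 p2.2) :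
    ∃ L, HLN (i + 1) n u v L := by
  have hdir : (p2.2 = p1.2 + 1 ∨ (p1.2 = n - 1 ∧ p2.2 = 0)) ∨
      (p1.2 = p2.2 + 1 ∨ (p2.2 = n - 1 ∧ p1.2 = 0)) := by
    unfold cyc at hcyc; omega
  rcases hdir with hD | hU
  · refine ⟨_, splice_core hn hi h
      (fun t => (i, if t ≤ p1.2 then p1.2 - t else p1.2 + n - t)) ?_ ?_ ?_ ?_ ?_ hp1 hp2⟩
    · exact Prod.ext rfl (by dsimp only; split_ifs <;> omega)
    · exact Prod.ext rfl (by dsimp only; split_ifs <;> omega)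
    · intro t ht
      refine ⟨rfl, ?_⟩
      dsimp only
      split_ifs <;> omega
    · intro t ht
      unfold adjN cyc
      dsimp only
      split_ifs <;> omega
    · intro s t hs ht hgeq
      simp only [Prod.mk.injEq] at hgeq
      rcases hgeq with ⟨-, hgeq⟩
      split_ifs at hgeq <;> omega
  · refine ⟨_, splice_core hn hi h
      (fun t => (i, if p1.2 + t < n then p1.2 + t else p1.2 + t - n)) ?_ ?_ ?_ ?_ ?_ hp1 hp2⟩
    · exact Prod.ext rfl (by dsimp only; split_ifs <;> omega)
    · exact Prod.ext rfl (by dsimp only; split_ifs <;> omega)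
    · intro t ht
      refine ⟨rfl, ?_⟩
      dsimp only
      split_ifs <;> omega
    · intro t ht
      unfold adjN cyc
      dsimp only
      split_ifs <;> omega
    · intro s t hs ht hgeq
      simp only [Prod.mk.injEq] at hgeq
      rcases hgeq with ⟨-, hgeq⟩
      split_ifs at hgeq <;> omega

lemma stepL {n : ℕ} (hn : 4 ≤ n) (he : n % 2 = 0) (i : ℕ) (hi : 2 ≤ i)
    (IH : ∀ u v : ℕ × ℕ, u.1 < i → u.2 < n → v.1 < i → v.2 < n →
      (u.1 + u.2) % 2 ≠ (v.1 + v.2) % 2 → ∃ l, HLN i n u v l) :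
    ∀ u v : ℕ × ℕ, u.1 < i + 1 → u.2 < n → v.1 < i + 1 → v.2 < n →
      (u.1 + u.2) % 2 ≠ (v.1 + v.2) % 2 → ∃ l, HLN (i + 1) n u v l := by
  -- case A : `v` on the new row, `u` not
  have caseA : ∀ u v : ℕ × ℕ, u.1 < i → u.2 < n → v.1 = i → v.2 < n →
      (u.1 + u.2) % 2 ≠ (v.1 + v.2) % 2 → ∃ L, HLN (i + 1) n u v L := by
    intro u v hu1 hu2 hv1 hv2 hcol
    obtain ⟨q1, hq1e⟩ : ∃ q1 : ℕ, (v.2 + 1 < n ∧ q1 = v.2 + 1) ∨ (v.2 + 1 = n ∧ q1 = 0) :=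
      ⟨if v.2 + 1 = n then 0 else v.2 + 1, by split_ifs <;> omega⟩
    obtain ⟨l, hl⟩ := IH u ((i - 1 : ℕ), q1) hu1 hu2 (by dsimp only; omega)
      (by dsimp only; omega) (by dsimp only; omega)
    have hE := extend_core hn (by omega) hl
      (fun t => (i, if q1 + t < n then q1 + t else q1 + t - n))
      (Prod.ext rfl (by dsimp only; split_ifs <;> omega))
      (fun t ht => ⟨rfl, by dsimp only; split_ifs <;> omega⟩)
      (fun t ht => by unfold adjN cyc; dsimp only; split_ifs <;> omega)
      (fun s t hs ht hgeq => by
        simp only [Prod.mk.injEq] at hgeq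
        rcases hgeq with ⟨-, hgeq⟩
        split_ifs at hgeq <;> omega)
      rfl
    have hgl : (fun t => ((i : ℕ), if q1 + t < n then q1 + t else q1 + t - n)) (n - 1) = v := by
      dsimp only
      have : v = (v.1, v.2) := rfl
      rw [this]
      refine Prod.ext ?_ ?_
      · dsimp only; omega
      · dsimp only; split_ifs <;> omega
    beta_reduce at hgl
    rw [hgl] at hE
    exact ⟨_, hE⟩
  -- case B : both on the new row
  have caseB : ∀ u v : ℕ × ℕ, u.1 = i → u.2 < n → v.1 = i → v.2 < n →
      (u.1 + u.2) % 2 ≠ (v.1 + v.2) % 2 → ∃ L, HLN (i + 1) n u v L := by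
    intro u v hu1 hu2 hv1 hv2 hcol
    have hpq : u.2 ≠ v.2 := by omega
    obtain ⟨d, hde⟩ : ∃ d : ℕ, (v.2 < u.2 ∧ d = u.2 - v.2) ∨ (u.2 < v.2 ∧ d = u.2 + n - v.2) :=
      ⟨if v.2 < u.2 then u.2 - v.2 else u.2 + n - v.2, by split_ifs <;> omega⟩
    obtain ⟨q1, hq1e⟩ : ∃ q1 : ℕ, (v.2 + 1 < n ∧ q1 = v.2 + 1) ∨ (v.2 + 1 = n ∧ q1 = 0) :=
      ⟨if v.2 + 1 = n then 0 else v.2 + 1, by split_ifs <;> omega⟩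
    obtain ⟨p1, hp1e⟩ : ∃ p1 : ℕ, (u.2 + 1 < n ∧ p1 = u.2 + 1) ∨ (u.2 + 1 = n ∧ p1 = 0) :=
      ⟨if u.2 + 1 = n then 0 else u.2 + 1, by split_ifs <;> omega⟩
    obtain ⟨l, hl⟩ := IH ((i - 1 : ℕ), q1) ((i - 1 : ℕ), p1) (by dsimp only; omega)
      (by dsimp only; omega) (by dsimp only; omega) (by dsimp only; omega)
      (by dsimp only; omega)
    have hD := doubleext_core hn (by omega) hl
      (fun t => (i, if t ≤ u.2 then u.2 - t else u.2 + n - t))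
      (fun t => (i, if u.2 + 1 + t < n then u.2 + 1 + t else u.2 + 1 + t - n))
      d (n - d) (by omega) (by omega) (by omega)
      (fun t ht => ⟨rfl, by dsimp only; split_ifs <;> omega⟩)
      (fun t ht => ⟨rfl, by dsimp only; split_ifs <;> omega⟩)
      (fun t ht => by unfold adjN cyc; dsimp only; split_ifs <;> omega)
      (fun t ht => by unfold adjN cyc; dsimp only; split_ifs <;> omega)
      (fun s t hs ht hgeq => by
        simp only [Prod.mk.injEq] at hgeq
        rcases hgeq with ⟨-, hgeq⟩
        split_ifs at hgeq <;> omega)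
      (fun s t hs ht hgeq => by
        simp only [Prod.mk.injEq] at hgeq
        rcases hgeq with ⟨-, hgeq⟩
        split_ifs at hgeq <;> omega)
      (Prod.ext rfl (by dsimp only; split_ifs <;> omega))
      rfl
      (Prod.ext rfl (by dsimp only; split_ifs <;> omega))
      rfl
      (fun s t hs ht hgeq => by
        simp only [Prod.mk.injEq] at hgeq
        rcases hgeq with ⟨-, hgeq⟩
        split_ifs at hgeq <;> omega)
    have hgP0 : (fun t => ((i : ℕ), if t ≤ u.2 then u.2 - t else u.2 + n - t)) 0 = u := by
      dsimp only
      have : u = (u.1, u.2) := rfl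
      rw [this]
      refine Prod.ext ?_ ?_
      · dsimp only; omega
      · dsimp only; split_ifs <;> omega
    have hgBl : (fun t => ((i : ℕ), if u.2 + 1 + t < n then u.2 + 1 + t else u.2 + 1 + t - n))
        (n - d - 1) = v := by
      dsimp only
      have : v = (v.1, v.2) := rfl
      rw [this]
      refine Prod.ext ?_ ?_
      · dsimp only; omega
      · dsimp only; split_ifs <;> omega
    beta_reduce at hgP0 hgBl
    rw [hgP0, hgBl] at hD
    exact ⟨_, hD⟩
  -- case C : both on old rows
  have caseC : ∀ u v : ℕ × ℕ, u.1 < i → u.2 < n → v.1 < i → v.2 < n →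
      (u.1 + u.2) % 2 ≠ (v.1 + v.2) % 2 → ∃ L, HLN (i + 1) n u v L := by
    intro u v hu1 hu2 hv1 hv2 hcol
    obtain ⟨l, hl⟩ := IH u v hu1 hu2 hv1 hv2 hcol
    obtain ⟨c0, hc0n, hc0u, hc0v⟩ :
        ∃ c0, c0 < n ∧ ((i - 1 : ℕ), c0) ≠ u ∧ ((i - 1 : ℕ), c0) ≠ v := by
      refine ⟨if (u.1 = i - 1 ∧ u.2 = 0) ∨ (v.1 = i - 1 ∧ v.2 = 0) then
        (if (u.1 = i - 1 ∧ u.2 = 1) ∨ (v.1 = i - 1 ∧ v.2 = 1) then 2 else 1) else 0,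
        ?_, ?_, ?_⟩
      · split_ifs <;> omega
      · intro hc
        rw [Prod.ext_iff] at hc
        obtain ⟨h1, h2⟩ := hc
        dsimp only at h1 h2
        split_ifs at h2 <;> omega
      · intro hc
        rw [Prod.ext_iff] at hc
        obtain ⟨h1, h2⟩ := hc
        dsimp only at h1 h2
        split_ifs at h2 <;> omega
    have hw_mem : ((i - 1 : ℕ), c0) ∈ l := hl.cover (by dsimp only; omega) (by dsimp only; omega)
    have hhd : l.head? ≠ some ((i - 1 : ℕ), c0) := by
      rw [hl.hd]
      intro hc
      rw [Option.some.injEq] at hc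
      exact hc0u hc.symm
    have hlst : l.getLast? ≠ some ((i - 1 : ℕ), c0) := by
      rw [hl.lst]
      intro hc
      rw [Option.some.injEq] at hc
      exact hc0v hc.symm
    obtain ⟨la, x, y, lb, hsplit⟩ := exists_triple hw_mem hhd hlst
    rw [hsplit] at hl
    obtain ⟨hxw, hwy⟩ := chain'_triple hl.chain
    obtain ⟨hxw_ne, hxy, hwy_ne⟩ := nodup_triple hl.nodup
    have hbx := hl.bnd x (by simp)
    have hby := hl.bnd y (by simp)
    have hbw : ((i - 1 : ℕ), c0).1 = i - 1 := rfl
    rcases hxw with ⟨hrow, hcyc⟩ | ⟨hcol2, hvert⟩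
    · -- x,w horizontal : splice between x and w
      exact splice_dir hn hi hl (by omega) hbw hbx.2 (by dsimp only; omega) hcyc
    · -- x,w vertical
      rcases hwy with ⟨hrow', hcyc'⟩ | ⟨hcol3, hvert'⟩
      · -- w,y horizontal : splice between w and y
        have he2 : la ++ x :: ((i - 1 : ℕ), c0) :: y :: lb =
            (la ++ [x]) ++ ((i - 1 : ℕ), c0) :: y :: lb := by simp
        rw [he2] at hl
        exact splice_dir hn hi hl hbw (by omega) (by dsimp only; omega) hby.2 hcyc'
      · -- both vertical : contradiction
        exfalso
        apply hxy
        refine Prod.ext ?_ ?_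
        · dsimp only at hvert hvert' hcol2 hcol3
          omega
        · dsimp only at hcol2 hcol3
          omega
  intro u v hu1 hu2 hv1 hv2 hcol
  rcases Nat.lt_or_ge u.1 i with hu | hu <;> rcases Nat.lt_or_ge v.1 i with hv | hv
  · exact caseC u v hu hu2 hv hv2 hcol
  · exact caseA u v hu hu2 (by omega) hv2 hcol
  · obtain ⟨L, hL⟩ := caseA v u hv hv2 (by omega) hu2 (Ne.symm hcol)
    exact ⟨L.reverse, hL.reverse⟩
  · exact caseB u v (by omega) hu2 (by omega) hv2 hcol

lemma mainN {n : ℕ} (hn : 4 ≤ n) (he : n % 2 = 0) :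
    ∀ i, 2 ≤ i → ∀ u v : ℕ × ℕ, u.1 < i → u.2 < n → v.1 < i → v.2 < n →
      (u.1 + u.2) % 2 ≠ (v.1 + v.2) % 2 → ∃ l, HLN i n u v l := by
  intro i hi
  induction i, hi using Nat.le_induction with
  | base => exact base2 hn he
  | succ i hi IH => exact stepL hn he i hi IH

end PCL

/-- `P_i □ C_{2j}` is Hamilton laceable for `i, j ≥ 2`. -/
theorem path_cycle_product_laceable (i j : ℕ) (hi : 2 ≤ i) (hj : 2 ≤ j) :
    HamLaceable ((SimpleGraph.pathGraph i).boxProd (SimpleGraph.cycleGraph (2 * j))) := by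
  classical
  have hn4 : 4 ≤ 2 * j := by omega
  have hn3 : 3 ≤ 2 * j := by omega
  have he : (2 * j) % 2 = 0 := by omega
  refine ⟨fun x => decide ((x.1.val + x.2.val) % 2 = 1), ?_, ?_⟩
  · intro x y hadj
    have hax := (PCL.adj_bridge hn3 x y).mp hadj
    have hx2 : x.2.val < 2 * j := x.2.isLt
    have hy2 : y.2.val < 2 * j := y.2.isLt
    have hne : (x.1.val + x.2.val) % 2 ≠ (y.1.val + y.2.val) % 2 := by
      simp only [PCL.adjN, PCL.cyc] at hax
      omega
    simp only [ne_eq, decide_eq_decide]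
    omega
  · intro x y hc
    have hcol : (x.1.val + x.2.val) % 2 ≠ (y.1.val + y.2.val) % 2 := by
      intro hcc
      exact hc (by simp only [hcc])
    obtain ⟨l, hl⟩ := PCL.mainN hn4 he i hi ((x.1.val : ℕ), (x.2.val : ℕ))
      ((y.1.val : ℕ), (y.2.val : ℕ)) x.1.isLt x.2.isLt y.1.isLt y.2.isLt hcol
    exact PCL.hln_exists_walk (by omega) hn3 x y hl
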